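/- For λ ∈ ℂ with λ(λ^3 - 1)(8λ^3 + 1) ≠ 0, the algebra C_λ = ℂ[x,y,z]/(x^2 - λyz, y^2 - λxz, z^2 - λxy) is a finite-dimensional local ℂ-algebra. -/

import Mathlib

set_option synthInstance.maxHeartbeats 800000
set_option maxHeartbeats 800000

open MvPolynomial

private lemma CL_ident0 (l : ℂ) :
    (1 - (C l : MvPolynomial (Fin 3) ℂ) ^ 3) * X 0 ^ 4 =
      ((1 - C l ^ 3) * X 0 ^ 2 + C l * X 1 * X 2) * (X 0 ^ 2 - C l * X 1 * X 2)
      + C l ^ 2 * X 2 ^ 2 * (X 1 ^ 2 - C l * X 0 * X 2)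
      + C l ^ 3 * X 0 * X 2 * (X 2 ^ 2 - C l * X 0 * X 1) := by ring

private lemma CL_ident1 (l : ℂ) :
    (1 - (C l : MvPolynomial (Fin 3) ℂ) ^ 3) * X 1 ^ 4 =
      ((1 - C l ^ 3) * X 1 ^ 2 + C l * X 2 * X 0) * (X 1 ^ 2 - C l * X 0 * X 2)
      + C l ^ 2 * X 0 ^ 2 * (X 2 ^ 2 - C l * X 0 * X 1)
      + C l ^ 3 * X 1 * X 0 * (X 0 ^ 2 - C l * X 1 * X 2) := by ring

private lemma CL_ident2 (l : ℂ) :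
    (1 - (C l : MvPolynomial (Fin 3) ℂ) ^ 3) * X 2 ^ 4 =
      ((1 - C l ^ 3) * X 2 ^ 2 + C l * X 0 * X 1) * (X 2 ^ 2 - C l * X 0 * X 1)
      + C l ^ 2 * X 1 ^ 2 * (X 0 ^ 2 - C l * X 1 * X 2)
      + C l ^ 3 * X 2 * X 1 * (X 1 ^ 2 - C l * X 0 * X 2) := by ring

private lemma CL_ker_constantCoeff :
    RingHom.ker (constantCoeff : MvPolynomial (Fin 3) ℂ →+* ℂ)
      = Ideal.span (Set.range (X : Fin 3 → MvPolynomial (Fin 3) ℂ)) := by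
  ext p
  rw [RingHom.mem_ker, ← Set.image_univ, mem_ideal_span_X_image, constantCoeff_eq]
  constructor
  · intro h m hm
    by_contra hc
    push_neg at hc
    have hm0 : m = 0 := Finsupp.ext fun i => by simpa using hc i (Set.mem_univ i)
    rw [hm0, mem_support_iff] at hm
    exact hm h
  · intro h
    by_contra hc
    obtain ⟨i, -, hi⟩ := h 0 (mem_support_iff.2 hc)
    simp at hi

/-- For `λ` with `λ(λ³-1)(8λ³+1) ≠ 0`, the algebra
`C_λ = ℂ[x,y,z]/(x² - λyz, y² - λxz, z² - λxy)` is a finite-dimensional local ℂ-algebra: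
it has a unique maximal ideal, generated by the images of `x, y, z`. -/
theorem C_lambda_finite_local (l : ℂ) (hl : l * (l ^ 3 - 1) * (8 * l ^ 3 + 1) ≠ 0) :
    FiniteDimensional ℂ
      (MvPolynomial (Fin 3) ℂ ⧸
        Ideal.span {(X 0 ^ 2 - C l * X 1 * X 2 : MvPolynomial (Fin 3) ℂ),
          X 1 ^ 2 - C l * X 0 * X 2, X 2 ^ 2 - C l * X 0 * X 1}) ∧
    IsLocalRing
      (MvPolynomial (Fin 3) ℂ ⧸
        Ideal.span {(X 0 ^ 2 - C l * X 1 * X 2 : MvPolynomial (Fin 3) ℂ),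
          X 1 ^ 2 - C l * X 0 * X 2, X 2 ^ 2 - C l * X 0 * X 1}) ∧
    (Ideal.span
        {Ideal.Quotient.mk
            (Ideal.span {(X 0 ^ 2 - C l * X 1 * X 2 : MvPolynomial (Fin 3) ℂ),
              X 1 ^ 2 - C l * X 0 * X 2, X 2 ^ 2 - C l * X 0 * X 1}) (X 0),
          Ideal.Quotient.mk _ (X 1), Ideal.Quotient.mk _ (X 2)}).IsMaximal := by
  
  set I : Ideal (MvPolynomial (Fin 3) ℂ) := Ideal.span {(X 0 ^ 2 - C l * X 1 * X 2 : MvPolynomial (Fin 3) ℂ),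
      X 1 ^ 2 - C l * X 0 * X 2, X 2 ^ 2 - C l * X 0 * X 1} with hI
  have hl3 : (1 : ℂ) - l ^ 3 ≠ 0 := by
    intro h
    apply hl
    have : l ^ 3 = 1 := by linear_combination -h
    rw [this]; ring
  -- generators in I
  have hg0 : (X 0 ^ 2 - C l * X 1 * X 2 : MvPolynomial (Fin 3) ℂ) ∈ I := Ideal.subset_span (by simp)
  have hg1 : (X 1 ^ 2 - C l * X 0 * X 2 : MvPolynomial (Fin 3) ℂ) ∈ I := Ideal.subset_span (by simp)
  have hg2 : (X 2 ^ 2 - C l * X 0 * X 1 : MvPolynomial (Fin 3) ℂ) ∈ I := Ideal.subset_span (by simp)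
  -- X i ^ 4 ∈ I
  have hX4 : ∀ i : Fin 3, (X i : MvPolynomial (Fin 3) ℂ) ^ 4 ∈ I := by
    have hcc : (C ((1 - l ^ 3)⁻¹) : MvPolynomial (Fin 3) ℂ) * (1 - C l ^ 3) = 1 := by
      rw [show ((1 : MvPolynomial (Fin 3) ℂ) - C l ^ 3) = C (1 - l ^ 3) by rw [map_sub, map_one, map_pow],
        ← map_mul, inv_mul_cancel₀ hl3, map_one]
    have key : ∀ i : Fin 3, (1 - (C l : MvPolynomial (Fin 3) ℂ) ^ 3) * X i ^ 4 ∈ I := by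
      intro i
      fin_cases i
      · show (1 - (C l : MvPolynomial (Fin 3) ℂ) ^ 3) * X 0 ^ 4 ∈ I
        rw [CL_ident0 l]
        exact Ideal.add_mem _ (Ideal.add_mem _ (Ideal.mul_mem_left _ _ hg0)
          (Ideal.mul_mem_left _ _ hg1)) (Ideal.mul_mem_left _ _ hg2)
      · show (1 - (C l : MvPolynomial (Fin 3) ℂ) ^ 3) * X 1 ^ 4 ∈ I
        rw [CL_ident1 l]
        exact Ideal.add_mem _ (Ideal.add_mem _ (Ideal.mul_mem_left _ _ hg1)
          (Ideal.mul_mem_left _ _ hg2)) (Ideal.mul_mem_left _ _ hg0)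
      · show (1 - (C l : MvPolynomial (Fin 3) ℂ) ^ 3) * X 2 ^ 4 ∈ I
        rw [CL_ident2 l]
        exact Ideal.add_mem _ (Ideal.add_mem _ (Ideal.mul_mem_left _ _ hg2)
          (Ideal.mul_mem_left _ _ hg0)) (Ideal.mul_mem_left _ _ hg1)
    intro i
    have : (X i : MvPolynomial (Fin 3) ℂ) ^ 4 = C ((1 - l ^ 3)⁻¹) * ((1 - (C l : MvPolynomial (Fin 3) ℂ) ^ 3) * X i ^ 4) := by
      rw [← mul_assoc, hcc, one_mul]
    rw [this]
    exact Ideal.mul_mem_left _ _ (key i)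
  set Q := MvPolynomial (Fin 3) ℂ ⧸ I with hQ
  set mk : MvPolynomial (Fin 3) ℂ →+* Q := Ideal.Quotient.mk I with hmk
  have hX4q : ∀ i : Fin 3, (mk (X i)) ^ 4 = 0 := by
    intro i
    rw [← map_pow, Ideal.Quotient.eq_zero_iff_mem]
    exact hX4 i
  have hnil : ∀ i : Fin 3, IsNilpotent (mk (X i)) := fun i => ⟨4, hX4q i⟩
  -- finite dimensionality
  have hfin : FiniteDimensional ℂ Q := by
    have hadj : Algebra.adjoin ℂ (⇑(Ideal.Quotient.mkₐ ℂ I) '' Set.range (X : Fin 3 → MvPolynomial (Fin 3) ℂ)) = ⊤ := by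
      rw [← AlgHom.map_adjoin, MvPolynomial.adjoin_range_X, Algebra.map_top,
        AlgHom.range_eq_top]
      exact Ideal.Quotient.mkₐ_surjective ℂ I
    have hfg : (⊤ : Subalgebra ℂ Q).toSubmodule.FG := by
      rw [← hadj]
      refine fg_adjoin_of_finite ((Set.finite_range _).image _) ?_
      rintro x ⟨p, ⟨i, rfl⟩, rfl⟩
      refine ⟨Polynomial.X ^ 4, Polynomial.monic_X_pow 4, ?_⟩
      simpa [Ideal.Quotient.mkₐ_eq_mk] using hX4q i
    exact ⟨by simpa using hfg⟩
  -- residue map to ℂ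
  have hIker : I ≤ RingHom.ker (constantCoeff : MvPolynomial (Fin 3) ℂ →+* ℂ) := by
    rw [hI, Ideal.span_le]
    rintro p hp
    simp only [Set.mem_insert_iff, Set.mem_singleton_iff] at hp
    rcases hp with rfl | rfl | rfl <;>
      simp [RingHom.mem_ker, map_sub, map_mul, map_pow, constantCoeff_X, constantCoeff_C]
  set φ : Q →+* ℂ := Ideal.Quotient.lift I constantCoeff hIker with hφ
  have hsurj : Function.Surjective φ := fun c =>
    ⟨mk (C c), by rw [hφ, hmk]; exact constantCoeff_C _ c⟩
  set m : Ideal Q := Ideal.span {mk (X 0), mk (X 1), mk (X 2)} with hm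
  have hrange : Set.range (X : Fin 3 → MvPolynomial (Fin 3) ℂ) = {X 0, X 1, X 2} := by
    ext p
    constructor
    · rintro ⟨i, rfl⟩
      fin_cases i <;> simp
    · rintro (rfl | rfl | rfl)
      exacts [⟨0, rfl⟩, ⟨1, rfl⟩, ⟨2, rfl⟩]
  have hker : RingHom.ker φ = m := by
    rw [hφ, Ideal.ker_quotient_lift, CL_ker_constantCoeff, Ideal.map_span, hrange, hm]
    congr 1
    rw [Set.image_insert_eq, Set.image_insert_eq, Set.image_singleton]
  have hmax : m.IsMaximal := hker ▸ RingHom.ker_isMaximal_of_surjective φ hsurj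
  have hnontriv : Nontrivial Q := φ.domain_nontrivial
  have hmle : m ≤ nilradical Q := by
    rw [hm, Ideal.span_le]
    rintro x hx
    simp only [Set.mem_insert_iff, Set.mem_singleton_iff] at hx
    rcases hx with rfl | rfl | rfl
    exacts [mem_nilradical.2 (hnil 0), mem_nilradical.2 (hnil 1), mem_nilradical.2 (hnil 2)]
  have hloc : IsLocalRing Q := by
    refine IsLocalRing.of_isUnit_or_isUnit_one_sub_self ?_
    intro a
    by_cases ha : a ∈ m
    · right
      exact (mem_nilradical.1 (hmle ha)).isUnit_one_sub
    · left
      obtain ⟨y, i, hiI, hy⟩ := hmax.exists_inv ha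
      have hu : IsUnit (y * a) := by
        have hya : y * a = 1 - i := by linear_combination hy
        rw [hya]
        exact (mem_nilradical.1 (hmle hiI)).isUnit_one_sub
      exact isUnit_of_mul_isUnit_right hu
  exact ⟨hfin, hloc, hmax⟩
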